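/- Let G be a d-bounded graph with d ≥ 2 in which every connected component that is not an isolated vertex either contains a vertex of degree at most d−1 or contains a cycle. Then any two connected components C1, C2 of G that are not isolated vertices can be merged into one connected component by modifying (adding or deleting) at most 3 edges, without exceeding maximum degree d. -/

import Mathlib

open SimpleGraph

/-- Rerouting: if the only edges of `G` missing from `H` are `s(a,b)`, and `a`, `b`
are reachable in `H`, then `G`-reachability implies `H`-reachability. -/
lemma aux_reroute {V : Type*} {G H : SimpleGraph V} {a b : V}
    (hH : ∀ ⦃x y : V⦄, G.Adj x y → H.Adj x y ∨ s(x, y) = s(a, b))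
    (hab : H.Reachable a b) {x y : V} (hr : G.Reachable x y) : H.Reachable x y := by
  obtain ⟨p⟩ := hr
  induction p with
  | nil => exact Reachable.refl _
  | cons h p ih =>
    rcases hH h with h' | h'
    · exact h'.reachable.trans ih
    · rw [Sym2.eq_iff] at h'
      rcases h' with ⟨rfl, rfl⟩ | ⟨rfl, rfl⟩
      · exact hab.trans ih
      · exact hab.symm.trans ih

lemma aux_edgeSet_sdiff {V : Type*} (G : SimpleGraph V) (E : Set (Sym2 V)) :
    (G \ fromEdgeSet E).edgeSet = G.edgeSet \ E := by
  simp [edgeSet_sdiff, edgeSet_fromEdgeSet, edgeSet_sdiff_sdiff_isDiag]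

/-- Per-component: a vertex of degree `≤ d-1` after deleting at most one
intra-component edge, keeping the component connected. -/
lemma aux_comp {V : Type*} [Fintype V] (G : SimpleGraph V) (d : ℕ)
    (hdeg : ∀ v, (G.neighborSet v).ncard ≤ d) (c : G.ConnectedComponent)
    (hc : (∃ v ∈ c.supp, (G.neighborSet v).ncard ≤ d - 1) ∨
      (∃ v ∈ c.supp, ∃ w : G.Walk v v, w.IsCycle)) :
    ∃ (v : V) (E : Set (Sym2 V)), v ∈ c.supp ∧ E ⊆ G.edgeSet ∧ E.ncard ≤ 1 ∧
      (∀ e ∈ E, ∀ x ∈ e, x ∈ c.supp) ∧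
      ((G \ fromEdgeSet E).neighborSet v).ncard ≤ d - 1 ∧
      (∀ x ∈ c.supp, (G \ fromEdgeSet E).Reachable x v) := by
  classical
  rcases hc with ⟨v, hv, hvd⟩ | ⟨u, hu, w, hw⟩
  · have hG : G \ fromEdgeSet (∅ : Set (Sym2 V)) = G := by
      ext x y; simp [sdiff_adj, fromEdgeSet_adj]
    refine ⟨v, ∅, hv, by simp, by simp, by simp, by rw [hG]; exact hvd, ?_⟩
    intro x hx
    rw [hG]
    rw [ConnectedComponent.mem_supp_iff] at hx hv
    exact ConnectedComponent.exact (hx.trans hv.symm)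
  · -- cycle case: delete an edge of the cycle
    have hne : w.edges ≠ [] := by
      have h3 := hw.three_le_length
      intro h
      rw [← Walk.length_edges, h] at h3
      simp at h3
    obtain ⟨e, he⟩ := List.exists_mem_of_ne_nil _ hne
    induction e using Sym2.ind with
    | _ a b =>
    have hadj : G.Adj a b := w.adj_of_mem_edges he
    have hreach : G.Adj a b ∧ (G \ fromEdgeSet {s(a, b)}).Reachable a b :=
      (adj_and_reachable_delete_edges_iff_exists_cycle).mpr ⟨u, w, hw, he⟩
    have ha : a ∈ c.supp := by
      have : a ∈ w.support := w.fst_mem_support_of_mem_edges he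
      rw [ConnectedComponent.mem_supp_iff] at hu ⊢
      rw [← hu, ConnectedComponent.eq]
      exact ⟨(w.takeUntil a this).reverse⟩
    have hb : b ∈ c.supp := by
      have : b ∈ w.support := w.snd_mem_support_of_mem_edges he
      rw [ConnectedComponent.mem_supp_iff] at hu ⊢
      rw [← hu, ConnectedComponent.eq]
      exact ⟨(w.takeUntil b this).reverse⟩
    have hHadj : ∀ ⦃x y : V⦄, G.Adj x y →
        (G \ fromEdgeSet {s(a, b)}).Adj x y ∨ s(x, y) = s(a, b) := by
      intro x y h
      by_cases h' : s(x, y) = s(a, b)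
      · exact Or.inr h'
      · exact Or.inl (by simp [sdiff_adj, fromEdgeSet_adj, h, h'])
    refine ⟨a, {s(a, b)}, ha, by simpa using hadj, by simp, ?_, ?_, ?_⟩
    · intro e he' x hx
      simp only [Set.mem_singleton_iff] at he'
      subst he'
      rcases Sym2.mem_iff.mp hx with rfl | rfl
      · exact ha
      · exact hb
    · have hsub : (G \ fromEdgeSet {s(a, b)}).neighborSet a ⊆ G.neighborSet a \ {b} := by
        intro x hx
        simp only [mem_neighborSet, sdiff_adj, fromEdgeSet_adj] at hx
        refine ⟨hx.1, ?_⟩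
        simp only [Set.mem_singleton_iff]
        rintro rfl
        exact hx.2 ⟨rfl, hx.1.ne⟩
      calc ((G \ fromEdgeSet {s(a, b)}).neighborSet a).ncard
          ≤ (G.neighborSet a \ {b}).ncard := Set.ncard_le_ncard hsub (Set.toFinite _)
        _ = (G.neighborSet a).ncard - 1 :=
            Set.ncard_diff_singleton_of_mem hadj
        _ ≤ d - 1 := Nat.sub_le_sub_right (hdeg a) 1
    · intro x hx
      apply aux_reroute hHadj hreach.2
      rw [ConnectedComponent.mem_supp_iff] at hx ha
      exact ConnectedComponent.exact (hx.trans ha.symm)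

/-- in a `d`-bounded graph (`d ≥ 2`) in which every connected component
that is not an isolated vertex contains a vertex of degree at most `d - 1` or contains
a cycle, any two distinct non-trivial connected components can be merged into one
connected component by modifying at most `3` edges, keeping maximum degree at most `d`. -/
theorem stmt7 {V : Type*} [Fintype V] (G : SimpleGraph V) (d : ℕ) (hd2 : 2 ≤ d)
    (hdeg : ∀ v, (G.neighborSet v).ncard ≤ d)
    (hstruct : ∀ c : G.ConnectedComponent, 2 ≤ c.supp.ncard →
      (∃ v ∈ c.supp, (G.neighborSet v).ncard ≤ d - 1) ∨
      (∃ v ∈ c.supp, ∃ w : G.Walk v v, w.IsCycle))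
    (c₁ c₂ : G.ConnectedComponent) (hne : c₁ ≠ c₂)
    (h₁ : 2 ≤ c₁.supp.ncard) (h₂ : 2 ≤ c₂.supp.ncard) :
    ∃ G' : SimpleGraph V,
      (symmDiff G.edgeSet G'.edgeSet).ncard ≤ 3 ∧
      (∀ v, (G'.neighborSet v).ncard ≤ d) ∧
      ∀ x ∈ c₁.supp, ∀ y ∈ c₂.supp, G'.Reachable x y := by
  classical
  obtain ⟨v₁, E₁, hv₁, hE₁G, hE₁c, hE₁supp, hdeg₁, hreach₁⟩ :=
    aux_comp G d hdeg c₁ (hstruct c₁ h₁)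
  obtain ⟨v₂, E₂, hv₂, hE₂G, hE₂c, hE₂supp, hdeg₂, hreach₂⟩ :=
    aux_comp G d hdeg c₂ (hstruct c₂ h₂)
  have hdisj : ∀ x, x ∈ c₁.supp → x ∈ c₂.supp → False := by
    intro x hx1 hx2
    rw [ConnectedComponent.mem_supp_iff] at hx1 hx2
    exact hne (hx1 ▸ hx2 ▸ rfl)
  have hv12 : v₁ ≠ v₂ := fun h => hdisj v₁ hv₁ (h ▸ hv₂)
  set H : SimpleGraph V := G \ fromEdgeSet (E₁ ∪ E₂) with hH
  set G' : SimpleGraph V := H ⊔ fromEdgeSet {s(v₁, v₂)} with hG'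
  -- transfer reachability from single-deletion graphs to H
  have htrans : ∀ (c : G.ConnectedComponent) (E E' : Set (Sym2 V)),
      (∀ e ∈ E', ∀ x ∈ e, x ∉ c.supp) →
      ∀ x y, x ∈ c.supp → (G \ fromEdgeSet E).Reachable x y →
      (G \ fromEdgeSet (E ∪ E')).Reachable x y := by
    intro c E E' hE' x y hx hr
    obtain ⟨p⟩ := hr
    have hsupp : ∀ z ∈ p.support, z ∈ c.supp := by
      intro z hz
      rw [ConnectedComponent.mem_supp_iff] at hx ⊢
      rw [← hx, ConnectedComponent.eq]
      exact ⟨((p.takeUntil z hz).mapLe sdiff_le).reverse⟩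
    refine ⟨p.transfer _ ?_⟩
    intro e hep
    have heG : e ∈ (G \ fromEdgeSet E).edgeSet := p.edges_subset_edgeSet hep
    rw [aux_edgeSet_sdiff] at heG
    rw [aux_edgeSet_sdiff]
    refine ⟨heG.1, ?_⟩
    intro hmem
    rcases hmem with hmem | hmem
    · exact heG.2 hmem
    · induction e using Sym2.ind with
      | _ x' y' =>
      exact hE' _ hmem x' (by simp)
        (hsupp x' (p.fst_mem_support_of_mem_edges hep))
  have hE₁' : ∀ e ∈ E₂, ∀ x ∈ e, x ∉ c₁.supp := by
    intro e he x hx hc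
    exact hdisj x hc (hE₂supp e he x hx)
  have hE₂' : ∀ e ∈ E₁, ∀ x ∈ e, x ∉ c₂.supp := by
    intro e he x hx hc
    exact hdisj x (hE₁supp e he x hx) hc
  have hreachH₁ : ∀ x ∈ c₁.supp, H.Reachable x v₁ := by
    intro x hx
    exact htrans c₁ E₁ E₂ hE₁' x v₁ hx (hreach₁ x hx)
  have hreachH₂ : ∀ x ∈ c₂.supp, H.Reachable x v₂ := by
    intro x hx
    have := htrans c₂ E₂ E₁ hE₂' x v₂ hx (hreach₂ x hx)
    rwa [Set.union_comm] at this
  have hHle : H ≤ G := sdiff_le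
  have hHle₁ : H ≤ G \ fromEdgeSet E₁ := by
    intro x y h
    simp only [hH, sdiff_adj, fromEdgeSet_adj, Set.mem_union] at h ⊢
    tauto
  have hHle₂ : H ≤ G \ fromEdgeSet E₂ := by
    intro x y h
    simp only [hH, sdiff_adj, fromEdgeSet_adj, Set.mem_union] at h ⊢
    tauto
  refine ⟨G', ?_, ?_, ?_⟩
  · -- edge modification count
    have hsub : symmDiff G.edgeSet G'.edgeSet ⊆ (E₁ ∪ E₂) ∪ {s(v₁, v₂)} := by
      intro e he
      rw [Set.mem_symmDiff] at he
      have hG'e : G'.edgeSet = (G.edgeSet \ (E₁ ∪ E₂)) ∪ ({s(v₁, v₂)} \ {e : Sym2 V | e.IsDiag}) := by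
        rw [hG', edgeSet_sup, aux_edgeSet_sdiff, edgeSet_fromEdgeSet]
        rfl
      rcases he with ⟨heG, heG'⟩ | ⟨heG', heG⟩
      · rw [hG'e] at heG'
        by_cases h : e ∈ E₁ ∪ E₂
        · exact Or.inl h
        · exact absurd (Or.inl ⟨heG, h⟩) heG'
      · rw [hG'e] at heG'
        rcases heG' with h | h
        · exact absurd h.1 heG
        · exact Or.inr h.1
    calc (symmDiff G.edgeSet G'.edgeSet).ncard
        ≤ ((E₁ ∪ E₂) ∪ {s(v₁, v₂)}).ncard := Set.ncard_le_ncard hsub (Set.toFinite _)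
      _ ≤ (E₁ ∪ E₂).ncard + ({s(v₁, v₂)} : Set (Sym2 V)).ncard := Set.ncard_union_le _ _
      _ ≤ (E₁.ncard + E₂.ncard) + 1 := by
          gcongr
          · exact Set.ncard_union_le _ _
          · simp
      _ ≤ (1 + 1) + 1 := by gcongr
      _ = 3 := rfl
  · -- degree bound
    intro v
    by_cases hv : v = v₁ ∨ v = v₂
    · have key : ∀ (w : V) (E : Set (Sym2 V)),
          ((G \ fromEdgeSet E).neighborSet v).ncard ≤ d - 1 → H ≤ G \ fromEdgeSet E →
          G'.neighborSet v ⊆ (G \ fromEdgeSet E).neighborSet v ∪ {w} →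
          (G'.neighborSet v).ncard ≤ d := by
        intro w E hdE hle hsub
        calc (G'.neighborSet v).ncard
            ≤ ((G \ fromEdgeSet E).neighborSet v ∪ {w}).ncard :=
              Set.ncard_le_ncard hsub (Set.toFinite _)
          _ ≤ ((G \ fromEdgeSet E).neighborSet v).ncard + 1 := by
              refine le_trans (Set.ncard_union_le _ _) ?_
              simp
          _ ≤ (d - 1) + 1 := by gcongr
          _ ≤ d := by omega
      rcases hv with rfl | rfl
      · refine key v₂ E₁ hdeg₁ hHle₁ ?_
        intro x hx
        simp only [hG', mem_neighborSet, sup_adj, fromEdgeSet_adj,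
          Set.mem_singleton_iff] at hx
        rcases hx with hx | ⟨hx, _⟩
        · exact Or.inl (hHle₁ hx)
        · rw [Sym2.eq_iff] at hx
          rcases hx with ⟨_, h2⟩ | ⟨h1, _⟩
          · exact Set.mem_union_right _ (Set.mem_singleton_iff.mpr h2)
          · exact absurd h1 hv12
      · refine key v₁ E₂ hdeg₂ hHle₂ ?_
        intro x hx
        simp only [hG', mem_neighborSet, sup_adj, fromEdgeSet_adj,
          Set.mem_singleton_iff] at hx
        rcases hx with hx | ⟨hx, _⟩
        · exact Or.inl (hHle₂ hx)
        · rw [Sym2.eq_iff] at hx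
          rcases hx with ⟨h1, _⟩ | ⟨_, h2⟩
          · exact absurd h1.symm hv12
          · exact Set.mem_union_right _ (Set.mem_singleton_iff.mpr h2)
    · push_neg at hv
      have hsub : G'.neighborSet v ⊆ G.neighborSet v := by
        intro x hx
        simp only [hG', mem_neighborSet, sup_adj, fromEdgeSet_adj,
          Set.mem_singleton_iff] at hx
        rcases hx with hx | ⟨hx, _⟩
        · exact hHle hx
        · rw [Sym2.eq_iff] at hx
          rcases hx with ⟨h1, _⟩ | ⟨h1, _⟩
          · exact absurd h1 hv.1
          · exact absurd h1 hv.2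
      exact le_trans (Set.ncard_le_ncard hsub (Set.toFinite _)) (hdeg v)
  · -- reachability
    have hHleG' : H ≤ G' := le_sup_left
    have hadj12 : G'.Adj v₁ v₂ := by
      rw [hG']
      exact Or.inr (by simp [fromEdgeSet_adj, hv12])
    intro x hx y hy
    have r1 : G'.Reachable x v₁ := ((hreachH₁ x hx).mono hHleG')
    have r2 : G'.Reachable v₂ y := ((hreachH₂ y hy).mono hHleG').symm
    exact r1.trans (hadj12.reachable.trans r2)
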